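/- Let J ⊆ ℝ be an open interval and F : J → ℝ a function with u − F(u) > 0 for all u ∈ J. Let g : J → ℝ be differentiable with g'(u) = 1/(u − F(u)), define Φ₀(u) = exp(g(u))/(u − F(u)) and P(u) = exp(g(u)), and let Q : J → ℝ be differentiable with Q'(u) = P(u). Define the Lagrangian L(θ, x, y) = tan²(θ)·Q(y·cot(θ) + x). Then for every twice differentiable function r : (θ₁, θ₂) → ℝ with (θ₁, θ₂) ⊆ (0, π/2) and r'(θ)·cot(θ) + r(θ) ∈ J for all θ, the Euler–Lagrange expression satisfies, for all θ ∈ (θ₁, θ₂): d/dθ[ (∂L/∂y)(θ, r(θ), r'(θ)) ] − (∂L/∂x)(θ, r(θ), r'(θ)) = Φ₀(r₁(θ))·( r''(θ) + r(θ) − F(r₁(θ)) ), where r₁(θ) = r'(θ)·cot(θ) + r(θ). -/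

import Mathlib

private lemma stmt_17_alg (E D s c R R' R'' : ℝ) (hs : s ≠ 0) (hc : c ≠ 0) (hD : D ≠ 0)
    (hp : s ^ 2 + c ^ 2 = 1) :
    1 / c ^ 2 * E + s / c * (E / D * (R'' * (c / s) + R' * -(1 / s ^ 2) + R')) -
      (s / c) ^ 2 * E = E / D * (R'' + R - (R' * (c / s) + R - D)) := by
  field_simp
  linear_combination (E * c * R' - E * s * D) * hp

/-- The translation-invariant Lagrangian `L(θ,x,y) = tan²θ · Q(y cot θ + x)`, where
`Q' = P = exp ∘ g` and `g' (u) = 1/(u - F u)`, has Euler–Lagrange expression equal to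
`Φ₀(r₁) (r'' + r - F(r₁))` with `r₁ = r' cot θ + r` and
`Φ₀(u) = exp(g u)/(u - F u)`. -/
theorem stmt_17 (J : Set ℝ) (hJopen : IsOpen J) (hJconn : J.OrdConnected)
    (F g : ℝ → ℝ) (hF : ∀ u ∈ J, 0 < u - F u)
    (hg : ∀ u ∈ J, HasDerivAt g (1 / (u - F u)) u)
    (P Q : ℝ → ℝ) (hP : ∀ u, P u = Real.exp (g u))
    (hQ : ∀ u ∈ J, HasDerivAt Q (P u) u)
    (Φ₀ : ℝ → ℝ) (hΦ₀ : ∀ u, Φ₀ u = Real.exp (g u) / (u - F u))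
    (L : ℝ → ℝ → ℝ → ℝ)
    (hL : ∀ θ x y, L θ x y = Real.tan θ ^ 2 * Q (y * Real.cot θ + x))
    (θ₁ θ₂ : ℝ) (hsub : Set.Ioo θ₁ θ₂ ⊆ Set.Ioo 0 (Real.pi / 2))
    (r r' r'' : ℝ → ℝ)
    (hr : ∀ θ ∈ Set.Ioo θ₁ θ₂, HasDerivAt r (r' θ) θ)
    (hr' : ∀ θ ∈ Set.Ioo θ₁ θ₂, HasDerivAt r' (r'' θ) θ)
    (hmem : ∀ θ ∈ Set.Ioo θ₁ θ₂, r' θ * Real.cot θ + r θ ∈ J) :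
    ∀ θ ∈ Set.Ioo θ₁ θ₂,
      deriv (fun t => deriv (fun y => L t (r t) y) (r' t)) θ -
          deriv (fun x => L θ x (r' θ)) (r θ) =
        Φ₀ (r' θ * Real.cot θ + r θ) *
          (r'' θ + r θ - F (r' θ * Real.cot θ + r θ)) := by
  have pi_pos := Real.pi_pos
  have hsin : ∀ t ∈ Set.Ioo θ₁ θ₂, Real.sin t ≠ 0 := by
    intro t ht
    have h := hsub ht
    exact (Real.sin_pos_of_pos_of_lt_pi h.1 (by linarith [h.2])).ne'
  have hcos : ∀ t ∈ Set.Ioo θ₁ θ₂, Real.cos t ≠ 0 := by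
    intro t ht
    have h := hsub ht
    exact (Real.cos_pos_of_mem_Ioo ⟨by linarith [h.1], h.2⟩).ne'
  -- derivative of P
  have hPd : ∀ u ∈ J, HasDerivAt P (P u / (u - F u)) u := by
    intro u hu
    rw [show P = fun u => Real.exp (g u) from funext hP]
    have := (hg u hu).exp
    simpa [hP, div_eq_mul_inv, mul_comm] using this
  -- derivative of cot
  have hcot : ∀ t ∈ Set.Ioo θ₁ θ₂, HasDerivAt Real.cot (-(1 / Real.sin t ^ 2)) t := by
    intro t ht
    have hs := hsin t ht
    have h : HasDerivAt (fun x => Real.cos x / Real.sin x)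
        ((-Real.sin t * Real.sin t - Real.cos t * Real.cos t) / Real.sin t ^ 2) t :=
      (Real.hasDerivAt_cos t).div (Real.hasDerivAt_sin t) hs
    have heq : (fun x => Real.cos x / Real.sin x) = Real.cot := by
      funext x; rw [Real.cot_eq_cos_div_sin]
    rw [heq] at h
    convert h using 1
    have h1 := Real.sin_sq_add_cos_sq t
    field_simp
    nlinarith [h1]
  -- step A: inner y-derivative
  have hA : ∀ t ∈ Set.Ioo θ₁ θ₂,
      deriv (fun y => L t (r t) y) (r' t)
        = Real.tan t * P (r' t * Real.cot t + r t) := by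
    intro t ht
    have h1 : HasDerivAt (fun y : ℝ => y * Real.cot t + r t) (Real.cot t) (r' t) := by
      simpa using ((hasDerivAt_id (r' t)).mul_const (Real.cot t)).add_const (r t)
    have h2 : HasDerivAt (fun y => Q (y * Real.cot t + r t))
        (P (r' t * Real.cot t + r t) * Real.cot t) (r' t) :=
      HasDerivAt.comp (r' t) (hQ _ (hmem t ht)) h1
    have hd : HasDerivAt (fun y => L t (r t) y)
        (Real.tan t ^ 2 * (P (r' t * Real.cot t + r t) * Real.cot t)) (r' t) := by
      simp only [hL]
      exact h2.const_mul _
    rw [hd.deriv]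
    rw [Real.tan_eq_sin_div_cos, Real.cot_eq_cos_div_sin]
    have hs := hsin t ht; have hc := hcos t ht
    field_simp
  intro θ hθ
  have hs := hsin θ hθ; have hc := hcos θ hθ
  -- step B: x-derivative
  have hB : deriv (fun x => L θ x (r' θ)) (r θ)
      = Real.tan θ ^ 2 * P (r' θ * Real.cot θ + r θ) := by
    have h1 : HasDerivAt (fun x : ℝ => r' θ * Real.cot θ + x) 1 (r θ) := by
      simpa using (hasDerivAt_id (r θ)).const_add (r' θ * Real.cot θ)
    have h2 : HasDerivAt (fun x => Q (r' θ * Real.cot θ + x))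
        (P (r' θ * Real.cot θ + r θ) * 1) (r θ) :=
      HasDerivAt.comp (r θ) (hQ _ (hmem θ hθ)) h1
    have hd : HasDerivAt (fun x => L θ x (r' θ))
        (Real.tan θ ^ 2 * (P (r' θ * Real.cot θ + r θ) * 1)) (r θ) := by
      simp only [hL]
      exact h2.const_mul _
    rw [hd.deriv]; ring
  -- eventual equality for the outer derivative
  have hev : (fun t => deriv (fun y => L t (r t) y) (r' t))
      =ᶠ[nhds θ] fun t => Real.tan t * P (r' t * Real.cot t + r t) := by
    filter_upwards [isOpen_Ioo.mem_nhds hθ] with t ht using hA t ht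
  rw [hev.deriv_eq, hB]
  set u := r' θ * Real.cot θ + r θ with hu
  have huJ := hmem θ hθ
  have hr₁ : HasDerivAt (fun t => r' t * Real.cot t + r t)
      (r'' θ * Real.cot θ + r' θ * (-(1 / Real.sin θ ^ 2)) + r' θ) θ :=
    ((hr' θ hθ).mul (hcot θ hθ)).add (hr θ hθ)
  have hPr₁ : HasDerivAt (fun t => P (r' t * Real.cot t + r t))
      (P u / (u - F u) * (r'' θ * Real.cot θ + r' θ * (-(1 / Real.sin θ ^ 2)) + r' θ)) θ :=
    (hPd u huJ).comp θ hr₁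
  have htan : HasDerivAt Real.tan (1 / Real.cos θ ^ 2) θ := Real.hasDerivAt_tan hc
  have hD : HasDerivAt (fun t => Real.tan t * P (r' t * Real.cot t + r t))
      (1 / Real.cos θ ^ 2 * P u +
        Real.tan θ *
          (P u / (u - F u) * (r'' θ * Real.cot θ + r' θ * (-(1 / Real.sin θ ^ 2)) + r' θ))) θ :=
    htan.mul hPr₁
  rw [hD.deriv, hΦ₀, ← hP]
  have hden : u - F u ≠ 0 := (hF u huJ).ne'
  set D := u - F u with hDdef
  have hFu : F u = r' θ * (Real.cos θ / Real.sin θ) + r θ - D := by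
    rw [hDdef, hu, Real.cot_eq_cos_div_sin]; ring
  rw [hFu, Real.tan_eq_sin_div_cos, Real.cot_eq_cos_div_sin]
  exact stmt_17_alg (P u) D (Real.sin θ) (Real.cos θ) (r θ) (r' θ) (r'' θ) hs hc hden
    (Real.sin_sq_add_cos_sq θ)
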